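/- Let P be a finite set of primes, m = (m_p) ∈ Z^P with m_p ≤ 0 for all p, and let S_x = Σ_{e ∈ N_0^P, Π p^{e_p} ≤ x} Π p^{m_p e_p}. Let j = |{p ∈ P : m_p = 0}|. Then there exist constants B ≥ A > 0 and x₀ such that A (log x)^j ≤ S_x ≤ B (log x)^j for all x > x₀. -/

import Mathlib

open Classical in
noncomputable def S14 (P : Finset ℕ) (m : ℕ → ℤ) (x : ℝ) : ℝ :=
  ∑' e : ({p // p ∈ P} → ℕ),
    if (∏ p : {p // p ∈ P}, ((p : ℕ) : ℝ) ^ (e p : ℕ)) ≤ x then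
      ∏ p : {p // p ∈ P}, ((p : ℕ) : ℝ) ^ (m p * (e p : ℤ))
    else 0

theorem chebyshev_estimate_nonpositive (P : Finset ℕ) (hP : ∀ p ∈ P, Nat.Prime p)
    (m : ℕ → ℤ) (hm : ∀ p ∈ P, m p ≤ 0) :
    ∃ A B x₀ : ℝ, 0 < A ∧ A ≤ B ∧ ∀ x : ℝ, x₀ < x →
      A * Real.log x ^ (P.filter (fun p => m p = 0)).card ≤ S14 P m x ∧
      S14 P m x ≤ B * Real.log x ^ (P.filter (fun p => m p = 0)).card := by
  classical
  set j := (P.filter (fun p => m p = 0)).card with hj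
  rcases eq_or_ne P ∅ with rfl | hPne
  · refine ⟨1, 1, 2, one_pos, le_refl _, fun x hx => ?_⟩
    have hske : S14 ∅ m x = 1 := by
      unfold S14
      haveI : IsEmpty {p // p ∈ (∅ : Finset ℕ)} := by
        constructor; rintro ⟨p, hp⟩; simp at hp
      rw [tsum_eq_single (fun _ => 0) (fun b hb => absurd (Subsingleton.elim b _) hb)]
      simp only [Finset.univ_eq_empty, Finset.prod_empty]
      rw [if_pos (by linarith)]
    rw [hske]
    simp [hj] at *
  · have hPne' : P.Nonempty := Finset.nonempty_iff_ne_empty.2 hPne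
    set n := P.card with hn
    set R := ∑ p ∈ P, Real.log p with hR
    have hp2 : ∀ p ∈ P, (2:ℝ) ≤ (p:ℝ) := fun p hp => by exact_mod_cast (hP p hp).two_le
    have hlogp : ∀ p ∈ P, 0 < Real.log p := fun p hp =>
      Real.log_pos (by linarith [hp2 p hp])
    have hRpos : 0 < R := Finset.sum_pos (fun p hp => hlogp p hp) hPne'
    have hlog2pos : (0:ℝ) < Real.log 2 := Real.log_pos (by norm_num)
    have hRlog2 : Real.log 2 ≤ R := by
      obtain ⟨p, hp⟩ := hPne'
      calc Real.log 2 ≤ Real.log p := by exact Real.log_le_log two_pos (hp2 p hp)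
        _ ≤ R := Finset.single_le_sum (fun q hq => (hlogp q hq).le) hp
    set A := (1/R)^j with hA
    set B := (2/Real.log 2)^j * 2^n with hB
    have hApos : 0 < A := by positivity
    have hAB : A ≤ B := by
      have h1 : (1/R : ℝ) ≤ 2/Real.log 2 := by
        rw [div_le_div_iff₀ hRpos hlog2pos]; nlinarith
      calc A ≤ (2/Real.log 2)^j := pow_le_pow_left₀ (by positivity) h1 j
        _ = (2/Real.log 2)^j * 1 := (mul_one _).symm
        _ ≤ B := by
            rw [hB]
            refine mul_le_mul_of_nonneg_left ?_ (by positivity)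
            exact one_le_pow₀ (by norm_num)
    refine ⟨A, B, 2, hApos, hAB, fun x hx => ?_⟩
    have hx1 : (1:ℝ) < x := by linarith
    have hx0 : (0:ℝ) < x := by linarith
    have hlogx : 0 < Real.log x := Real.log_pos hx1
    set f : ({p // p ∈ P} → ℕ) → ℝ := fun e =>
      if (∏ p : {p // p ∈ P}, ((p : ℕ) : ℝ) ^ (e p : ℕ)) ≤ x then
        ∏ p : {p // p ∈ P}, ((p : ℕ) : ℝ) ^ (m p * (e p : ℤ))
      else 0 with hf
    have hS : S14 P m x = ∑' e, f e := by
      unfold S14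
      refine tsum_congr fun e => ?_
      simp only [hf]
    have hfnn : ∀ e, 0 ≤ f e := fun e => by
      simp only [hf]; split
      · exact Finset.prod_nonneg fun p _ => zpow_nonneg (Nat.cast_nonneg _) _
      · exact le_refl 0
    have hcond_le : ∀ (e : {p // p ∈ P} → ℕ) (q : {p // p ∈ P}),
        (∏ p : {p // p ∈ P}, ((p:ℕ):ℝ) ^ (e p : ℕ)) ≤ x → (2:ℝ) ^ (e q) ≤ x := by
      intro e q h
      have hprodnat : (∏ p : {p // p ∈ P}, ((p:ℕ):ℝ) ^ (e p))
          = ((∏ p : {p // p ∈ P}, (p:ℕ) ^ (e p) : ℕ) : ℝ) := by push_cast; rfl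
      have h1 : (q:ℕ) ^ (e q) ≤ ∏ p : {p // p ∈ P}, (p:ℕ) ^ (e p) :=
        Nat.le_of_dvd (Finset.prod_pos fun p _ => pow_pos (hP p p.2).pos _)
          (Finset.dvd_prod_of_mem _ (Finset.mem_univ q))
      have h2 : (2:ℕ) ^ (e q) ≤ (q:ℕ) ^ (e q) := Nat.pow_le_pow_left (hP q q.2).two_le _
      have h3 : ((2:ℕ)^(e q) : ℝ) ≤ x := by
        rw [hprodnat] at h
        exact le_trans (by exact_mod_cast le_trans h2 h1) h
      exact_mod_cast h3
    set K := ⌊Real.logb 2 x⌋₊ with hK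
    set E := Fintype.piFinset (fun _ : {p // p ∈ P} => Finset.range (K+1)) with hE
    have hvanish : ∀ e ∉ E, f e = 0 := by
      intro e he
      simp only [hf]
      rw [if_neg]
      intro h
      rw [hE, Fintype.mem_piFinset] at he
      push_neg at he
      obtain ⟨q, hq⟩ := he
      rw [Finset.mem_range, not_lt] at hq
      have h2 : (2:ℝ) ^ (K+1) ≤ x :=
        le_trans (pow_le_pow_right₀ (by norm_num) hq) (hcond_le e q h)
      have h4 : ((K:ℝ)+1) * Real.log 2 ≤ Real.log x := by
        have h5 := Real.log_le_log (by positivity) h2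
        rw [Real.log_pow] at h5
        push_cast at h5
        linarith
      have hlt : Real.logb 2 x < (K:ℝ) + 1 := Nat.lt_floor_add_one _
      rw [Real.logb, div_lt_iff₀ hlog2pos] at hlt
      linarith
    have hsum : Summable f := summable_of_ne_finset_zero hvanish
    have hSsum : S14 P m x = ∑ e ∈ E, f e := by
      rw [hS]; exact tsum_eq_sum hvanish
    constructor
    · -- lower bound
      set M := ⌊Real.log x / R⌋₊ with hM
      set t : {p // p ∈ P} → Finset ℕ :=
        fun q => if m ↑q = 0 then Finset.range (M+1) else {0} with ht
      set E₀ := Fintype.piFinset t with hE₀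
      have heM : ∀ e ∈ E₀, ∀ q, e q ≤ M := by
        intro e he q
        rw [hE₀, Fintype.mem_piFinset] at he
        have h := he q
        rw [ht] at h
        dsimp only at h
        split at h
        · rw [Finset.mem_range] at h; omega
        · rw [Finset.mem_singleton] at h; omega
      have hfone : ∀ e ∈ E₀, f e = 1 := by
        intro e he
        have hcond : (∏ p : {p // p ∈ P}, ((p:ℕ):ℝ) ^ (e p : ℕ)) ≤ x := by
          have hb : (∏ p : {p // p ∈ P}, ((p:ℕ):ℝ) ^ (e p))
              ≤ ∏ p : {p // p ∈ P}, ((p:ℕ):ℝ) ^ M := by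
            refine Finset.prod_le_prod (fun p _ => by positivity) (fun p _ => ?_)
            exact pow_le_pow_right₀ (by linarith [hp2 ↑p p.2]) (heM e he p)
          have hb2 : ∏ p : {p // p ∈ P}, ((p:ℕ):ℝ) ^ M = (∏ p ∈ P, (p:ℝ)) ^ M := by
            rw [Finset.prod_coe_sort P (fun p => ((p:ℝ))^M), Finset.prod_pow]
          have hprodpos : (0:ℝ) < ∏ p ∈ P, (p:ℝ) :=
            Finset.prod_pos fun p hp => by linarith [hp2 p hp]
          have hlogprod : Real.log ((∏ p ∈ P, (p:ℝ)) ^ M) = M * R := by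
            rw [Real.log_pow, hR, Real.log_prod]
            intro p hp
            have := hp2 p hp; intro h0; rw [h0] at this; linarith
          have hMR : (M:ℝ) * R ≤ Real.log x := by
            have hfl : (M:ℝ) ≤ Real.log x / R := Nat.floor_le (by positivity)
            calc (M:ℝ) * R ≤ (Real.log x / R) * R :=
                mul_le_mul_of_nonneg_right hfl hRpos.le
              _ = Real.log x := div_mul_cancel₀ _ (ne_of_gt hRpos)
          have hfin : (∏ p ∈ P, (p:ℝ)) ^ M ≤ x := by
            rw [← Real.exp_log (pow_pos hprodpos M), ← Real.exp_log hx0]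
            exact Real.exp_le_exp.2 (by rw [hlogprod]; exact hMR)
          calc (∏ p : {p // p ∈ P}, ((p:ℕ):ℝ) ^ (e p)) ≤ _ := hb
            _ = _ := hb2
            _ ≤ x := hfin
        simp only [hf]
        rw [if_pos hcond]
        refine Finset.prod_eq_one fun p _ => ?_
        by_cases hmp : m ↑p = 0
        · rw [hmp]; simp
        · have h0 : e p = 0 := by
            rw [hE₀, Fintype.mem_piFinset] at he
            have h := he p
            rw [ht] at h
            dsimp only at h
            rw [if_neg hmp, Finset.mem_singleton] at h
            exact h
          rw [h0]; simp
      have hcard : E₀.card = (M+1)^j := by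
        rw [hE₀, Fintype.card_piFinset]
        have : ∀ q : {p // p ∈ P}, (t q).card = (if m ↑q = 0 then M+1 else 1) := by
          intro q; rw [ht]; dsimp only; split <;> simp
        rw [Finset.prod_congr rfl (fun q _ => this q)]
        rw [Finset.prod_coe_sort P (fun p => if m p = 0 then M+1 else 1)]
        rw [Finset.prod_ite, Finset.prod_const, Finset.prod_const, one_pow, mul_one, hj]
      have hsum0 : ∑ e ∈ E₀, f e = ((M:ℝ)+1)^j := by
        rw [Finset.sum_congr rfl hfone, Finset.sum_const, nsmul_eq_mul, mul_one, hcard]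
        push_cast; ring
      have hle : ∑ e ∈ E₀, f e ≤ S14 P m x := by
        rw [hS]
        exact Summable.sum_le_tsum E₀ (fun e _ => hfnn e) hsum
      have hM1 : Real.log x / R ≤ (M:ℝ) + 1 := le_of_lt (Nat.lt_floor_add_one _)
      calc A * Real.log x ^ j = (Real.log x / R)^j := by
            rw [hA, ← mul_pow, one_div, inv_mul_eq_div]
        _ ≤ ((M:ℝ)+1)^j := pow_le_pow_left₀ (by positivity) hM1 j
        _ = ∑ e ∈ E₀, f e := hsum0.symm
        _ ≤ S14 P m x := hle
    · -- upper bound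
      rw [hSsum]
      have step1 : ∑ e ∈ E, f e
          ≤ ∑ e ∈ E, ∏ p : {p // p ∈ P}, ((p:ℕ):ℝ) ^ (m ↑p * (e p : ℤ)) := by
        refine Finset.sum_le_sum fun e _ => ?_
        simp only [hf]; split
        · exact le_refl _
        · exact Finset.prod_nonneg fun p _ => zpow_nonneg (Nat.cast_nonneg _) _
      have step2 : ∑ e ∈ E, ∏ p : {p // p ∈ P}, ((p:ℕ):ℝ) ^ (m ↑p * (e p : ℤ))
          = ∏ p : {p // p ∈ P}, ∑ k ∈ Finset.range (K+1), ((p:ℕ):ℝ) ^ (m ↑p * (k:ℤ)) := by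
        rw [hE]
        exact (Finset.prod_univ_sum (fun _ : {p // p ∈ P} => Finset.range (K+1))
          (fun p k => ((p:ℕ):ℝ) ^ (m ↑p * (k:ℤ)))).symm
      have hfac : ∀ p : {p // p ∈ P},
          ∑ k ∈ Finset.range (K+1), ((p:ℕ):ℝ) ^ (m ↑p * (k:ℤ))
            ≤ (if m ↑p = 0 then ((K:ℝ)+1) else 2) := by
        intro p
        by_cases hmp : m ↑p = 0
        · rw [if_pos hmp]
          simp [hmp]
        · rw [if_neg hmp]
          have h1p : (1:ℝ) ≤ ((p:ℕ):ℝ) := by linarith [hp2 ↑p p.2]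
          have hple : ((p:ℕ):ℝ) ^ (m ↑p) ≤ 2⁻¹ := by
            have hm1 : m ↑p ≤ -1 := by
              have := hm ↑p p.2; omega
            calc ((p:ℕ):ℝ) ^ (m ↑p) ≤ ((p:ℕ):ℝ) ^ (-1 : ℤ) :=
                zpow_le_zpow_right₀ h1p hm1
              _ = (((p:ℕ):ℝ))⁻¹ := zpow_neg_one _
              _ ≤ 2⁻¹ := by
                  rw [inv_le_inv₀ (by linarith) (by norm_num)]
                  exact hp2 ↑p p.2
          have hterm : ∀ k : ℕ, ((p:ℕ):ℝ) ^ (m ↑p * (k:ℤ)) ≤ (2⁻¹:ℝ)^k := by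
            intro k
            have hz : ((p:ℕ):ℝ) ^ (m ↑p * (k:ℤ)) = (((p:ℕ):ℝ) ^ (m ↑p))^k := by
              rw [zpow_mul, zpow_natCast]
            rw [hz]
            exact pow_le_pow_left₀ (zpow_nonneg (Nat.cast_nonneg _) _) hple k
          calc ∑ k ∈ Finset.range (K+1), ((p:ℕ):ℝ) ^ (m ↑p * (k:ℤ))
              ≤ ∑ k ∈ Finset.range (K+1), (2⁻¹:ℝ)^k :=
                Finset.sum_le_sum fun k _ => hterm k
            _ ≤ 2 := by
                have ht0 : (0:ℝ) ≤ (2⁻¹:ℝ)^(K+1) := by positivity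
                rw [geom_sum_eq (by norm_num : (2⁻¹:ℝ) ≠ 1)]
                rw [div_le_iff_of_neg (by norm_num : (2⁻¹:ℝ) - 1 < 0)]
                linarith
      have step3 : ∏ p : {p // p ∈ P}, ∑ k ∈ Finset.range (K+1), ((p:ℕ):ℝ) ^ (m ↑p * (k:ℤ))
          ≤ ∏ p : {p // p ∈ P}, (if m ↑p = 0 then ((K:ℝ)+1) else 2) :=
        Finset.prod_le_prod
          (fun p _ => Finset.sum_nonneg fun k _ => zpow_nonneg (Nat.cast_nonneg _) _)
          (fun p _ => hfac p)
      have step4 : ∏ p : {p // p ∈ P}, (if m ↑p = 0 then ((K:ℝ)+1) else 2)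
          = ((K:ℝ)+1)^j * 2^(P.filter (fun p => ¬ m p = 0)).card := by
        rw [Finset.prod_coe_sort P (fun p => if m p = 0 then ((K:ℝ)+1) else 2)]
        rw [Finset.prod_ite, Finset.prod_const, Finset.prod_const, hj]
      have hcard2 : (P.filter (fun p => ¬ m p = 0)).card ≤ n := Finset.card_filter_le _ _
      have h2pow : (2:ℝ)^(P.filter (fun p => ¬ m p = 0)).card ≤ 2^n :=
        pow_le_pow_right₀ (by norm_num) hcard2
      have hK1 : ((K:ℝ)+1) ≤ (2/Real.log 2) * Real.log x := by
        have hKle : (K:ℝ) ≤ Real.logb 2 x :=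
          Nat.floor_le (Real.logb_nonneg (by norm_num) (by linarith))
        have h1le : (1:ℝ) ≤ Real.logb 2 x := by
          rw [Real.logb, le_div_iff₀ hlog2pos, one_mul]
          exact Real.log_le_log two_pos (by linarith)
        have h6 : ((K:ℝ)+1) ≤ 2 * Real.logb 2 x := by linarith
        calc ((K:ℝ)+1) ≤ 2 * Real.logb 2 x := h6
          _ = (2/Real.log 2) * Real.log x := by rw [Real.logb]; ring
      have hK1j : ((K:ℝ)+1)^j ≤ (2/Real.log 2)^j * Real.log x ^ j := by
        rw [← mul_pow]
        exact pow_le_pow_left₀ (by positivity) hK1 j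
      calc ∑ e ∈ E, f e
          ≤ ∑ e ∈ E, ∏ p : {p // p ∈ P}, ((p:ℕ):ℝ) ^ (m ↑p * (e p : ℤ)) := step1
        _ = ∏ p : {p // p ∈ P}, ∑ k ∈ Finset.range (K+1), ((p:ℕ):ℝ) ^ (m ↑p * (k:ℤ)) := step2
        _ ≤ ∏ p : {p // p ∈ P}, (if m ↑p = 0 then ((K:ℝ)+1) else 2) := step3
        _ = ((K:ℝ)+1)^j * 2^(P.filter (fun p => ¬ m p = 0)).card := step4
        _ ≤ ((2/Real.log 2)^j * Real.log x ^ j) * 2^n :=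
            mul_le_mul hK1j h2pow (by positivity) (by positivity)
        _ = B * Real.log x ^ j := by rw [hB]; ring
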